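/- Let S be a finite semigroup that is a left regular band of groups, with idempotent-power map ω. Then S is strict, i.e. ω(s·t) = (ω s)·(ω t) for all s,t ∈ S, if and only if S is a union of a band of groups; concretely, if and only if there exist a semigroup B in which every element is idempotent (a band) and a surjective semigroup homomorphism φ : S → B such that every fiber of φ is a group: for each b ∈ B there exists e ∈ S with φ(e) = b such that for every s with φ(s) = b one has e·s = s and s·e = s, and there exists t with φ(t) = b, s·t = e and t·s = e. -/
import Mathlib

section Aux

variable {S : Type u} [Semigroup S]

lemma lrbg_iter_succ (s : S) (n : ℕ) :
    (fun t => t * s)^[n + 1] s = (fun t => t * s)^[n] s * s :=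
  Function.iterate_succ_apply' _ n s

/-- Powers of `s` commute with `s`. -/
lemma lrbg_iter_comm (s : S) : ∀ n : ℕ,
    (fun t => t * s)^[n] s * s = s * (fun t => t * s)^[n] s := by
  intro n
  induction n with
  | zero => rfl
  | succ n ih =>
    rw [lrbg_iter_succ]
    calc (fun t => t * s)^[n] s * s * s = s * (fun t => t * s)^[n] s * s := by rw [ih]
      _ = s * ((fun t => t * s)^[n] s * s) := mul_assoc _ _ _

lemma lrbg_iter_idem {e : S} (he : e * e = e) : ∀ n : ℕ,
    (fun t => t * e)^[n] e = e := by
  intro n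
  induction n with
  | zero => rfl
  | succ n ih => rw [lrbg_iter_succ, ih, he]

end Aux

/-- A finite LRBG is strict (`ω(s·t) = (ω s)·(ω t)`) if and only if
it is a union of a band of groups: there is a band `B` (an associative multiplication
all of whose elements are idempotent) and a surjective semigroup homomorphism
`φ : S → B` all of whose fibers are groups. -/
theorem lrbg_strict_iff_band_of_groups {S : Type u} [Semigroup S] [Fintype S]
    (ω : S → S)
    (hidem : ∀ s : S, ω s * ω s = ω s)
    (hpow : ∀ s : S, ∃ n : ℕ, ω s = (fun t => t * s)^[n] s)
    (lrbg1 : ∀ s : S, ω s * s = s)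
    (lrbg2 : ∀ s t : S, s * t * ω s = s * t) :
    (∀ s t : S, ω (s * t) = ω s * ω t) ↔
    ∃ (B : Type u) (mulB : B → B → B) (φ : S → B),
      (∀ a b c : B, mulB (mulB a b) c = mulB a (mulB b c)) ∧
      (∀ b : B, mulB b b = b) ∧
      (∀ a b : S, φ (a * b) = mulB (φ a) (φ b)) ∧
      Function.Surjective φ ∧
      (∀ b : B, ∃ e : S, φ e = b ∧
        ∀ s : S, φ s = b →
          e * s = s ∧ s * e = s ∧ ∃ t : S, φ t = b ∧ s * t = e ∧ t * s = e) := by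
  -- basic facts, not using strictness
  have homega : ∀ e : S, e * e = e → ω e = e := by
    intro e he
    obtain ⟨n, hn⟩ := hpow e
    rw [hn, lrbg_iter_idem he]
  have hsws : ∀ s : S, s * ω s = s := by
    intro s
    obtain ⟨n, hn⟩ := hpow s
    rw [hn, ← lrbg_iter_comm, ← hn, lrbg1]
  have hprodidem : ∀ e f : S, e * e = e → f * f = f → (e * f) * (e * f) = e * f := by
    intro e f he hf
    have h2 := lrbg2 e f
    rw [homega e he] at h2
    calc (e * f) * (e * f) = ((e * f) * e) * f := by rw [mul_assoc (e * f) e f]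
      _ = (e * f) * f := by rw [h2]
      _ = e * (f * f) := by rw [mul_assoc]
      _ = e * f := by rw [hf]
  constructor
  · -- strict → band of groups
    intro hstrict
    -- ω of any power of s is ω s
    have hiterω : ∀ s : S, ∀ n : ℕ, ω ((fun t => t * s)^[n] s) = ω s := by
      intro s n
      induction n with
      | zero => rfl
      | succ n ih => rw [lrbg_iter_succ, hstrict, ih, hidem]
    refine ⟨{x : S // x * x = x}, fun a b => ⟨a.1 * b.1, hprodidem _ _ a.2 b.2⟩,
      fun s => ⟨ω s, hidem s⟩, ?_, ?_, ?_, ?_, ?_⟩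
    · intro a b c; exact Subtype.ext (mul_assoc _ _ _)
    · intro b; exact Subtype.ext b.2
    · intro a b; exact Subtype.ext (hstrict a b)
    · rintro ⟨x, hx⟩; exact ⟨x, Subtype.ext (homega x hx)⟩
    · rintro ⟨x, hx⟩
      refine ⟨x, Subtype.ext (homega x hx), ?_⟩
      intro s hs
      have hωs : ω s = x := congrArg Subtype.val hs
      refine ⟨by rw [← hωs]; exact lrbg1 s, by rw [← hωs]; exact hsws s, ?_⟩
      obtain ⟨n, hn⟩ := hpow s
      have hts : (fun t => t * s)^[n - 1] s * s = x := by
        rcases Nat.eq_zero_or_pos n with h0 | hpos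
        · subst h0
          have h1 : s = x := by rw [← hωs, hn]; rfl
          show s * s = x
          rw [h1, hx]
        · have h1 : (fun t => t * s)^[n - 1] s * s = (fun t => t * s)^[n] s := by
            rw [← lrbg_iter_succ]
            congr 1
            omega
          rw [h1, ← hn, hωs]
      refine ⟨(fun t => t * s)^[n - 1] s, ?_, ?_, hts⟩
      · refine Subtype.ext ?_
        show ω ((fun t => t * s)^[n - 1] s) = x
        rw [hiterω, hωs]
      · rw [← lrbg_iter_comm, hts]
  · -- band of groups → strict
    rintro ⟨B, mulB, φ, hassoc, hband, hhom, hsurj, hfib⟩ s t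
    -- φ is preserved under powers
    have hiterφ : ∀ u : S, ∀ n : ℕ, φ ((fun v => v * u)^[n] u) = φ u := by
      intro u n
      induction n with
      | zero => rfl
      | succ n ih => rw [lrbg_iter_succ, hhom, ih, hband]
    have hφω : ∀ u : S, φ (ω u) = φ u := by
      intro u
      obtain ⟨n, hn⟩ := hpow u
      rw [hn, hiterφ]
    set b := φ (s * t) with hb
    have h1 : φ (ω (s * t)) = b := hφω (s * t)
    have h2 : φ (ω s * ω t) = b := by
      rw [hhom, hφω, hφω, ← hhom]
    have h1i : ω (s * t) * ω (s * t) = ω (s * t) := hidem _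
    have h2i : (ω s * ω t) * (ω s * ω t) = ω s * ω t :=
      hprodidem _ _ (hidem s) (hidem t)
    obtain ⟨e, he, hgrp⟩ := hfib b
    have key : ∀ x : S, φ x = b → x * x = x → x = e := by
      intro x hx hxi
      obtain ⟨hex, hxe, t', ht', hxt', _⟩ := hgrp x hx
      calc x = x * e := hxe.symm
        _ = x * (x * t') := by rw [hxt']
        _ = (x * x) * t' := by rw [mul_assoc]
        _ = x * t' := by rw [hxi]
        _ = e := hxt'
    rw [key _ h1 h1i, key _ h2 h2i]
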